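/- Let α > 0, let X₁ be Bernoulli(p) with 0 ≤ p ≤ 1 and X₂ a real random variable independent of X₁ with continuous cumulative distribution function F, and set Z = αX₁ + X₂. With Z₁, Z₂ independent copies of Z and h_{s,t}(x) = 1{min(s,t) ≤ x ≤ max(s,t)}, the ball sensitivity numerator with respect to X₁ satisfies S¹₂ := E_{Z₁,Z₂}[ Var( E[ h_{Z₁,Z₂}(Z) | X₁ ] ) ] = 2p(1−p) · Var( F(Z) − F(Z−α) ). -/

import Mathlib

open MeasureTheory ProbabilityTheory Real Set

/-- The indicator function of the "ball" (closed interval) with diameter the segment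
joining `s` and `t` on the real line: `h_{s,t}(x) = 1{min(s,t) ≤ x ≤ max(s,t)}`. -/
noncomputable def hball (s t x : ℝ) : ℝ := if min s t ≤ x ∧ x ≤ max s t then 1 else 0


lemma hball_eq (s t : ℝ) :
    hball s t = Set.indicator (Icc (min s t) (max s t)) (fun _ => (1:ℝ)) := by
  funext x; simp [hball, Set.indicator_apply, Set.mem_Icc]

lemma bern_integrable (p : ℝ) (f : ℝ → ℝ) :
    Integrable f (ENNReal.ofReal p • Measure.dirac (1:ℝ)
      + ENNReal.ofReal (1-p) • Measure.dirac (0:ℝ)) := by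
  rw [integrable_add_measure]
  exact ⟨((integrable_const (f 1)).congr (ae_eq_dirac f).symm).smul_measure ENNReal.ofReal_ne_top,
    ((integrable_const (f 0)).congr (ae_eq_dirac f).symm).smul_measure ENNReal.ofReal_ne_top⟩

lemma integral_bern {p : ℝ} (hp0 : 0 ≤ p) (hp1 : p ≤ 1) (f : ℝ → ℝ) :
    ∫ x, f x ∂(ENNReal.ofReal p • Measure.dirac (1:ℝ)
      + ENNReal.ofReal (1-p) • Measure.dirac (0:ℝ)) = p * f 1 + (1 - p) * f 0 := by
  have h := integrable_add_measure.mp (bern_integrable p f)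
  rw [integral_add_measure h.1 h.2, integral_smul_measure, integral_smul_measure,
    integral_dirac, integral_dirac, ENNReal.toReal_ofReal hp0,
    ENNReal.toReal_ofReal (by linarith)]
  simp [smul_eq_mul]

lemma variance_congr' {Ω : Type*} [MeasurableSpace Ω] {μ : Measure Ω} {f g : Ω → ℝ}
    (h : f =ᵐ[μ] g) : variance f μ = variance g μ := by
  have hi : μ[f] = μ[g] := integral_congr_ae h
  unfold ProbabilityTheory.variance ProbabilityTheory.evariance
  rw [hi]
  congr 1
  exact lintegral_congr_ae (h.mono fun ω hω => by simp only [hω])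

lemma int_of_bdd {α : Type*} [MeasurableSpace α] (μ : Measure α) [IsFiniteMeasure μ]
    {f : α → ℝ} (hf : AEStronglyMeasurable f μ) (C : ℝ) (h : ∀ x, |f x| ≤ C) :
    Integrable f μ :=
  memLp_one_iff_integrable.mp <| MemLp.of_bound hf C
    (Filter.Eventually.of_forall (by simpa [Real.norm_eq_abs] using h))

/-- Let `α > 0`, `X₁ ~ Bernoulli(p)` with `0 ≤ p ≤ 1`, `X₂` independent
of `X₁` with continuous CDF `F`, and `Z = αX₁ + X₂`.  With `Z₁, Z₂` independent copies of
`Z`, the ball sensitivity numerator with respect to `X₁` satisfies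
`S¹₂ = E_{Z₁,Z₂}[Var(E[h_{Z₁,Z₂}(Z) | X₁])] = 2p(1-p)·Var(F(Z) - F(Z-α))`. -/
theorem stmt10 {Ω : Type*} [MeasurableSpace Ω] (μ : Measure Ω) [IsProbabilityMeasure μ]
    (α p : ℝ) (hα : 0 < α) (hp0 : 0 ≤ p) (hp1 : p ≤ 1)
    (X₁ X₂ : Ω → ℝ) (hX₁ : Measurable X₁) (hX₂ : Measurable X₂)
    (hBer : μ.map X₁ = ENNReal.ofReal p • Measure.dirac (1 : ℝ)
      + ENNReal.ofReal (1 - p) • Measure.dirac (0 : ℝ))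
    (hindep : IndepFun X₁ X₂ μ)
    (F : ℝ → ℝ) (hF : ∀ t, F t = (μ {ω | X₂ ω ≤ t}).toReal) (hFcont : Continuous F)
    (Z : Ω → ℝ) (hZ : Z = fun ω => α * X₁ ω + X₂ ω) :
    ∫ q : ℝ × ℝ,
        variance (μ[(fun ω => hball q.1 q.2 (Z ω)) |
          MeasurableSpace.comap X₁ inferInstance]) μ
        ∂((μ.map Z).prod (μ.map Z))
      = 2 * p * (1 - p) * variance (fun ω => F (Z ω) - F (Z ω - α)) μ := by
  -- measurability of basic sets
  have hmle : ∀ a : ℝ, MeasurableSet {ω | X₂ ω ≤ a} := fun a => hX₂ measurableSet_Iic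
  have hmlt : ∀ a : ℝ, MeasurableSet {ω | a < X₂ ω} := fun a => hX₂ measurableSet_Ioi
  --半 open interval measure
  have hIoc : ∀ a b : ℝ, a ≤ b →
      (μ {ω | a < X₂ ω ∧ X₂ ω ≤ b}).toReal = F b - F a := by
    intro a b hab
    have hsplit : {ω | X₂ ω ≤ b} = {ω | X₂ ω ≤ a} ∪ {ω | a < X₂ ω ∧ X₂ ω ≤ b} := by
      ext ω; simp only [mem_setOf_eq, mem_union]
      constructor
      · intro h; by_cases h' : X₂ ω ≤ a
        · exact Or.inl h'
        · exact Or.inr ⟨lt_of_not_ge h', h⟩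
      · rintro (h | ⟨_, h⟩); exacts [h.trans hab, h]
    have hdisj : Disjoint {ω | X₂ ω ≤ a} {ω | a < X₂ ω ∧ X₂ ω ≤ b} := by
      rw [Set.disjoint_left]; rintro ω h ⟨h1, _⟩; exact absurd h (not_le.mpr h1)
    have hms : MeasurableSet {ω | a < X₂ ω ∧ X₂ ω ≤ b} := by
      have : {ω | a < X₂ ω ∧ X₂ ω ≤ b} = {ω | a < X₂ ω} ∩ {ω | X₂ ω ≤ b} := rfl
      rw [this]; exact (hmlt a).inter (hmle b)
    have := measure_union (μ := μ) hdisj hms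
    rw [← hsplit] at this
    have hfin : μ {ω | X₂ ω ≤ a} ≠ ⊤ := measure_ne_top μ _
    have hfin2 : μ {ω | a < X₂ ω ∧ X₂ ω ≤ b} ≠ ⊤ := measure_ne_top μ _
    rw [hF b, hF a, this, ENNReal.toReal_add hfin hfin2]; ring
  -- atoms have measure zero
  have hatom : ∀ a : ℝ, (μ {ω | X₂ ω = a}).toReal = 0 := by
    intro a
    have key : ∀ n : ℕ, (μ {ω | X₂ ω = a}).toReal ≤ F a - F (a - 1/(n+1)) := by
      intro n
      have hpos : (0:ℝ) < 1/(n+1) := by positivity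
      have hsub : {ω | X₂ ω = a} ⊆ {ω | a - 1/(n+1) < X₂ ω ∧ X₂ ω ≤ a} := by
        intro ω h; simp only [mem_setOf_eq] at h ⊢; rw [h]; constructor <;> linarith
      have := ENNReal.toReal_mono (measure_ne_top μ _) (measure_mono hsub)
      rwa [hIoc _ _ (by linarith)] at this
    have htend : Filter.Tendsto (fun n : ℕ => F a - F (a - 1/(n+1))) Filter.atTop (nhds 0) := by
      have h1 : Filter.Tendsto (fun n : ℕ => a - 1/(n+1)) Filter.atTop (nhds a) := by
        have : Filter.Tendsto (fun n : ℕ => 1 / ((n : ℝ) + 1)) Filter.atTop (nhds 0) :=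
          tendsto_one_div_add_atTop_nhds_zero_nat
        have := (tendsto_const_nhds (x := a)).sub this
        simpa using this
      have h2 := (hFcont.tendsto a).comp h1
      have := (tendsto_const_nhds (x := F a)).sub h2
      simpa using this
    have hle0 : (μ {ω | X₂ ω = a}).toReal ≤ 0 :=
      ge_of_tendsto htend (Filter.Eventually.of_forall key)
    exact le_antisymm hle0 ENNReal.toReal_nonneg
  -- closed interval measure
  have hIcc : ∀ a b : ℝ, a ≤ b →
      (μ {ω | a ≤ X₂ ω ∧ X₂ ω ≤ b}).toReal = F b - F a := by
    intro a b hab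
    have hsplit : {ω | a ≤ X₂ ω ∧ X₂ ω ≤ b} = {ω | X₂ ω = a} ∪ {ω | a < X₂ ω ∧ X₂ ω ≤ b} := by
      ext ω; simp only [mem_setOf_eq, mem_union]
      constructor
      · rintro ⟨h1, h2⟩
        rcases eq_or_lt_of_le h1 with h | h
        · exact Or.inl h.symm
        · exact Or.inr ⟨h, h2⟩
      · rintro (h | ⟨h1, h2⟩)
        · exact ⟨le_of_eq h.symm, h ▸ hab⟩
        · exact ⟨h1.le, h2⟩
    have hms : MeasurableSet {ω | a < X₂ ω ∧ X₂ ω ≤ b} := (hmlt a).inter (hmle b)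
    have hdisj : Disjoint {ω | X₂ ω = a} {ω | a < X₂ ω ∧ X₂ ω ≤ b} := by
      rw [Set.disjoint_left]; rintro ω h ⟨h1, _⟩
      simp only [mem_setOf_eq] at h; rw [h] at h1; exact lt_irrefl a h1
    rw [hsplit, measure_union hdisj hms,
      ENNReal.toReal_add (measure_ne_top μ _) (measure_ne_top μ _), hatom,
      hIoc _ _ hab]; ring
  
  have hZm : Measurable Z := by rw [hZ]; exact (measurable_const.mul hX₁).add hX₂
  have hFm : Measurable F := hFcont.measurable
  set Gf : ℝ → ℝ := fun x => F x - F (x - α) with hGf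
  have hGfm : Measurable Gf := hFm.sub (hFm.comp (measurable_id.sub measurable_const))
  have hF01 : ∀ t : ℝ, 0 ≤ F t ∧ F t ≤ 1 := by
    intro t; rw [hF t]
    refine ⟨ENNReal.toReal_nonneg, ?_⟩
    have h1 : μ {ω | X₂ ω ≤ t} ≤ 1 := prob_le_one
    have := ENNReal.toReal_mono (by norm_num) h1
    simpa using this
  have hm : MeasurableSpace.comap X₁ inferInstance ≤ _ := hX₁.comap_le
  have hballm : ∀ s t : ℝ, Measurable (hball s t) := by
    intro s t; rw [hball_eq]; exact measurable_const.indicator measurableSet_Icc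
  have hballb : ∀ s t x : ℝ, |hball s t x| ≤ 1 := by
    intro s t x; unfold hball; split <;> norm_num
  have hmapX : μ.map (fun ω => (X₁ ω, X₂ ω)) = (μ.map X₁).prod (μ.map X₂) :=
    (indepFun_iff_map_prod_eq_prod_map_map hX₁.aemeasurable hX₂.aemeasurable).mp hindep
  haveI hpX₁ : IsProbabilityMeasure (μ.map X₁) := Measure.isProbabilityMeasure_map hX₁.aemeasurable
  haveI hpX₂ : IsProbabilityMeasure (μ.map X₂) := Measure.isProbabilityMeasure_map hX₂.aemeasurable
  have hX01 : ∀ᵐ ω ∂μ, X₁ ω = 0 ∨ X₁ ω = 1 := by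
    have hms : MeasurableSet ({0, 1} : Set ℝ) := (measurableSet_singleton (1:ℝ)).insert 0
    have h0 : μ.map X₁ ({0, 1} : Set ℝ)ᶜ = 0 := by
      rw [hBer]
      simp [Measure.dirac_apply' _ hms.compl]
    rw [Measure.map_apply hX₁ hms.compl] at h0
    have : ∀ᵐ ω ∂μ, X₁ ω ∈ ({0, 1} : Set ℝ) := by
      rw [ae_iff]
      exact h0
    filter_upwards [this] with ω hω
    simpa using hω
  have hvar : ∀ s t : ℝ,
      variance (μ[(fun ω => hball s t (Z ω)) | MeasurableSpace.comap X₁ inferInstance]) μ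
        = p * (1 - p) * (Gf s - Gf t)^2 := by
    intro s t
    have hmM : min s t ≤ max s t := min_le_max
    set I : ℝ → ℝ := fun x => F (max s t - α * x) - F (min s t - α * x) with hIdef
    have hI : ∀ x : ℝ, ∫ ω, hball s t (α * x + X₂ ω) ∂μ = I x := by
      intro x
      have hms : MeasurableSet {ω | min s t - α*x ≤ X₂ ω ∧ X₂ ω ≤ max s t - α*x} :=
        (hX₂ measurableSet_Ici).inter (hX₂ measurableSet_Iic)
      have heq : (fun ω => hball s t (α * x + X₂ ω))
          = Set.indicator {ω | min s t - α*x ≤ X₂ ω ∧ X₂ ω ≤ max s t - α*x} (fun _ => (1:ℝ)) := by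
        funext ω
        simp only [hball, Set.indicator_apply, mem_setOf_eq]
        refine if_congr ?_ rfl rfl
        constructor <;> rintro ⟨h1, h2⟩ <;> constructor <;> linarith
      rw [heq, integral_indicator_const _ hms, smul_eq_mul, mul_one, measureReal_def,
        hIcc _ _ (by linarith)]
    have hgbm : Measurable (fun x : ℝ => I 0 + (I 1 - I 0) * x) :=
      measurable_const.add (measurable_const.mul measurable_id)
    have hG₀int : Integrable (fun ω => I 0 + (I 1 - I 0) * X₁ ω) μ := by
      have h5 : Integrable (fun x : ℝ => I 0 + (I 1 - I 0) * x) (μ.map X₁) := by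
        rw [hBer]; exact bern_integrable p _
      exact (integrable_map_measure hgbm.aestronglyMeasurable hX₁.aemeasurable).mp h5
    have hf_int : Integrable (fun ω => hball s t (Z ω)) μ :=
      int_of_bdd μ ((hballm s t).comp hZm).aestronglyMeasurable 1 (fun ω => hballb s t (Z ω))
    have hsetint : ∀ B : Set ℝ, MeasurableSet B →
        ∫ ω in X₁ ⁻¹' B, (I 0 + (I 1 - I 0) * X₁ ω) ∂μ
          = ∫ ω in X₁ ⁻¹' B, hball s t (Z ω) ∂μ := by
      intro B hB
      have hRHS : ∫ ω in X₁ ⁻¹' B, hball s t (Z ω) ∂μ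
          = p * (B.indicator (fun _ => (1:ℝ)) 1 * I 1)
            + (1-p) * (B.indicator (fun _ => (1:ℝ)) 0 * I 0) := by
        set φ : ℝ × ℝ → ℝ :=
          fun v => B.indicator (fun _ => (1:ℝ)) v.1 * hball s t (α * v.1 + v.2) with hφ
        have hφm : Measurable φ :=
          ((measurable_const.indicator hB).comp measurable_fst).mul
            ((hballm s t).comp ((measurable_const.mul measurable_fst).add measurable_snd))
        have hφb : ∀ v : ℝ × ℝ, |φ v| ≤ 1 := by
          intro v
          rw [hφ, abs_mul]
          have h1 : |B.indicator (fun _ => (1:ℝ)) v.1| ≤ 1 := by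
            by_cases h : v.1 ∈ B <;> simp [Set.indicator_apply, h]
          have h2 := hballb s t (α * v.1 + v.2)
          calc |B.indicator (fun _ => (1:ℝ)) v.1| * |hball s t (α * v.1 + v.2)|
              ≤ 1 * 1 := by
                exact mul_le_mul h1 h2 (abs_nonneg _) zero_le_one
            _ = 1 := by norm_num
        have h1 : ∫ ω in X₁ ⁻¹' B, hball s t (Z ω) ∂μ = ∫ ω, φ (X₁ ω, X₂ ω) ∂μ := by
          rw [← integral_indicator (hX₁ hB)]
          congr 1; funext ω
          by_cases h : X₁ ω ∈ B <;> simp [hφ, Set.indicator_apply, h, hZ]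
        have h2 : ∫ ω, φ (X₁ ω, X₂ ω) ∂μ = ∫ v, φ v ∂((μ.map X₁).prod (μ.map X₂)) := by
          rw [← hmapX, integral_map (hX₁.prodMk hX₂).aemeasurable hφm.aestronglyMeasurable]
        have hφint : Integrable φ ((μ.map X₁).prod (μ.map X₂)) :=
          int_of_bdd _ hφm.aestronglyMeasurable 1 hφb
        have h3 : ∫ v, φ v ∂((μ.map X₁).prod (μ.map X₂))
            = ∫ x, B.indicator (fun _ => (1:ℝ)) x
                * (∫ y, hball s t (α * x + y) ∂(μ.map X₂)) ∂(μ.map X₁) := by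
          rw [MeasureTheory.integral_prod _ hφint]
          congr 1; funext x
          simp only [hφ]
          rw [integral_const_mul]
        have h4 : ∀ x : ℝ, ∫ y, hball s t (α * x + y) ∂(μ.map X₂) = I x := by
          intro x
          have hmm : Measurable (fun y : ℝ => hball s t (α * x + y)) :=
            (hballm s t).comp (measurable_const.add measurable_id)
          rw [integral_map hX₂.aemeasurable hmm.aestronglyMeasurable]
          exact hI x
        rw [h1, h2, h3]
        simp only [h4]
        rw [hBer, integral_bern hp0 hp1]
      have hLHS : ∫ ω in X₁ ⁻¹' B, (I 0 + (I 1 - I 0) * X₁ ω) ∂μ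
          = p * (B.indicator (fun _ => (1:ℝ)) 1 * (I 0 + (I 1 - I 0) * 1))
            + (1-p) * (B.indicator (fun _ => (1:ℝ)) 0 * (I 0 + (I 1 - I 0) * 0)) := by
        rw [← integral_indicator (hX₁ hB)]
        have heq2 : (X₁ ⁻¹' B).indicator (fun ω => I 0 + (I 1 - I 0) * X₁ ω)
            = fun ω => (fun x => B.indicator (fun _ => (1:ℝ)) x * (I 0 + (I 1 - I 0) * x)) (X₁ ω) := by
          funext ω; by_cases h : X₁ ω ∈ B <;> simp [Set.indicator_apply, h]
        rw [heq2, ← integral_map (f := fun x => B.indicator (fun _ => (1:ℝ)) x * (I 0 + (I 1 - I 0) * x)) hX₁.aemeasurable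
          ((measurable_const.indicator hB).mul hgbm).aestronglyMeasurable,
          hBer, integral_bern hp0 hp1]
      rw [hLHS, hRHS]
      congr 1
      · congr 1; ring_nf
      · congr 1; ring_nf
    have hcond : (fun ω => I 0 + (I 1 - I 0) * X₁ ω) =ᵐ[μ]
        μ[(fun ω => hball s t (Z ω)) | MeasurableSpace.comap X₁ inferInstance] := by
      refine ae_eq_condExp_of_forall_setIntegral_eq hm hf_int
        (fun si _ _ => hG₀int.integrableOn) ?_ ?_
      · rintro si ⟨B, hB, rfl⟩ _
        exact hsetint B hB
      · refine StronglyMeasurable.aestronglyMeasurable ?_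
        refine Measurable.stronglyMeasurable ?_
        have hX₁c : Measurable[MeasurableSpace.comap X₁ inferInstance] X₁ :=
          fun si hs => ⟨si, hs, rfl⟩
        exact measurable_const.add (measurable_const.mul hX₁c)
    rw [← variance_congr' hcond]
    have hmem : MemLp (fun ω => I 0 + (I 1 - I 0) * X₁ ω) 2 μ := by
      refine MemLp.of_bound (hgbm.comp hX₁).aestronglyMeasurable (|I 0| + |I 1 - I 0|) ?_
      filter_upwards [hX01] with ω hω
      rcases hω with h | h <;> rw [Real.norm_eq_abs, h]
      · simp only [mul_zero, add_zero]
        have := abs_nonneg (I 1 - I 0); linarith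
      · simp only [mul_one]
        exact abs_add_le _ _
    rw [variance_eq_sub hmem]
    have hEG : μ[fun ω => I 0 + (I 1 - I 0) * X₁ ω]
        = p * (I 0 + (I 1 - I 0) * 1) + (1-p) * (I 0 + (I 1 - I 0) * 0) := by
      have h6 := integral_map (μ := μ) (f := fun x : ℝ => I 0 + (I 1 - I 0) * x)
        hX₁.aemeasurable hgbm.aestronglyMeasurable
      rw [← h6, hBer, integral_bern hp0 hp1]
    have hgb2m : Measurable (fun x : ℝ => (I 0 + (I 1 - I 0) * x)^2) := hgbm.pow_const 2
    have hEG2 : μ[(fun ω => I 0 + (I 1 - I 0) * X₁ ω) ^ 2]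
        = p * (I 0 + (I 1 - I 0) * 1)^2 + (1-p) * (I 0 + (I 1 - I 0) * 0)^2 := by
      have h6 := integral_map (μ := μ) (f := fun x : ℝ => (I 0 + (I 1 - I 0) * x)^2)
        hX₁.aemeasurable hgb2m.aestronglyMeasurable
      have h7 : μ[(fun ω => I 0 + (I 1 - I 0) * X₁ ω) ^ 2]
          = ∫ ω, (I 0 + (I 1 - I 0) * X₁ ω)^2 ∂μ := by
        congr 1
      rw [h7, ← h6, hBer, integral_bern hp0 hp1]
    rw [hEG, hEG2]
    have hd : (I 1 - I 0)^2 = (Gf s - Gf t)^2 := by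
      rcases le_total s t with h | h
      · simp only [hIdef, hGf, min_eq_left h, max_eq_right h]; ring_nf
      · simp only [hIdef, hGf, min_eq_right h, max_eq_left h]; ring_nf
    rw [← hd]; ring
  
  haveI hνp : IsProbabilityMeasure (μ.map Z) := Measure.isProbabilityMeasure_map hZm.aemeasurable
  have hstep : ∫ q : ℝ × ℝ,
      variance (μ[(fun ω => hball q.1 q.2 (Z ω)) | MeasurableSpace.comap X₁ inferInstance]) μ
      ∂((μ.map Z).prod (μ.map Z))
      = ∫ q : ℝ × ℝ, p * (1-p) * ((Gf q.1 - Gf q.2)^2) ∂((μ.map Z).prod (μ.map Z)) :=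
    integral_congr_ae (Filter.Eventually.of_forall fun q => hvar q.1 q.2)
  rw [hstep, integral_const_mul]
  set A := ∫ x, Gf x ∂(μ.map Z) with hA
  set B := ∫ x, (Gf x)^2 ∂(μ.map Z) with hB
  have hGfb : ∀ x : ℝ, |Gf x| ≤ 2 := by
    intro x
    have h1 := hF01 x; have h2 := hF01 (x - α)
    rw [hGf, abs_le]; constructor <;> simp only <;> linarith [h1.1, h1.2, h2.1, h2.2]
  have hGfint : Integrable Gf (μ.map Z) := int_of_bdd _ hGfm.aestronglyMeasurable 2 hGfb
  have hGf2int : Integrable (fun x => (Gf x)^2) (μ.map Z) := by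
    refine int_of_bdd _ (hGfm.pow_const 2).aestronglyMeasurable 4 (fun x => ?_)
    have h1 := hGfb x
    calc |(Gf x)^2| = |Gf x|^2 := by rw [abs_pow]
      _ ≤ 2^2 := by nlinarith [abs_nonneg (Gf x)]
      _ = 4 := by norm_num
  have hprodint : Integrable (fun q : ℝ × ℝ => (Gf q.1 - Gf q.2)^2)
      ((μ.map Z).prod (μ.map Z)) := by
    refine int_of_bdd _ (((hGfm.comp measurable_fst).sub
      (hGfm.comp measurable_snd)).pow_const 2).aestronglyMeasurable 16 (fun q => ?_)
    have h1 := hGfb q.1; have h2 := hGfb q.2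
    have h3 : |Gf q.1 - Gf q.2| ≤ 4 := by
      calc |Gf q.1 - Gf q.2| ≤ |Gf q.1| + |Gf q.2| := abs_sub _ _
        _ ≤ 4 := by linarith
    calc |(Gf q.1 - Gf q.2)^2| = |Gf q.1 - Gf q.2|^2 := by rw [abs_pow]
      _ ≤ 4^2 := by nlinarith [abs_nonneg (Gf q.1 - Gf q.2)]
      _ = 16 := by norm_num
  have hdouble : ∫ q : ℝ × ℝ, (Gf q.1 - Gf q.2)^2 ∂((μ.map Z).prod (μ.map Z))
      = 2 * (B - A^2) := by
    rw [MeasureTheory.integral_prod _ hprodint]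
    have hinner : ∀ x : ℝ, ∫ y, (Gf x - Gf y)^2 ∂(μ.map Z)
        = ((Gf x)^2 - 2 * Gf x * A) + B := by
      intro x
      have he : (fun y => (Gf x - Gf y)^2)
          = fun y => ((Gf x)^2 + (-(2 * Gf x)) * Gf y) + (Gf y)^2 := by
        funext y; ring
      have i1 : Integrable (fun y => (Gf x)^2 + (-(2 * Gf x)) * Gf y) (μ.map Z) :=
        (integrable_const _).add (hGfint.const_mul _)
      have i2 : Integrable (fun y : ℝ => (-(2 * Gf x)) * Gf y) (μ.map Z) :=
        hGfint.const_mul _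
      rw [he, integral_add i1 hGf2int,
        integral_add (integrable_const _) i2,
        integral_const, integral_const_mul]
      simp [measure_univ]
      ring
    simp only [hinner]
    have i3 : Integrable (fun x : ℝ => 2 * Gf x * A) (μ.map Z) :=
      (hGfint.const_mul 2).mul_const A
    have i4 : Integrable (fun x => (Gf x)^2 - 2 * Gf x * A) (μ.map Z) := hGf2int.sub i3
    rw [integral_add i4 (integrable_const _),
      integral_sub hGf2int i3,
      integral_mul_const, integral_const_mul, integral_const]
    simp only [measure_univ, probReal_univ, ENNReal.toReal_one, smul_eq_mul, one_mul, ← hA, ← hB]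
    ring
  have hmemZ : MemLp (fun ω => F (Z ω) - F (Z ω - α)) 2 μ := by
    refine MemLp.of_bound ((hGfm.comp hZm).aestronglyMeasurable) 2 ?_
    exact Filter.Eventually.of_forall fun ω => by
      simpa [Real.norm_eq_abs, hGf] using hGfb (Z ω)
  have hvarZ : variance (fun ω => F (Z ω) - F (Z ω - α)) μ = B - A^2 := by
    rw [variance_eq_sub hmemZ]
    have h1 : μ[fun ω => F (Z ω) - F (Z ω - α)] = A := by
      rw [hA]
      exact (integral_map hZm.aemeasurable hGfm.aestronglyMeasurable).symm
    have h2 : μ[(fun ω => F (Z ω) - F (Z ω - α)) ^ 2] = B := by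
      rw [hB]
      have h6 := integral_map (μ := μ) (f := fun x : ℝ => (Gf x)^2)
        hZm.aemeasurable (hGfm.pow_const 2).aestronglyMeasurable
      rw [h6]
      congr 1
    rw [h1, h2]
  rw [hdouble, hvarZ]
  ring
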